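/- Let X be a finite-dimensional real normed space and x ∈ X a nonzero vector. Then there exists a hyperplane H of codimension 1 such that x ⊥_B H, i.e., x ⊥_B h for every h ∈ H. -/

import Mathlib

def BJOrth {X : Type*} [NormedAddCommGroup X] [NormedSpace ℝ X] (x y : X) : Prop :=
  ∀ lam : ℝ, ‖x + lam • y‖ ≥ ‖x‖

theorem exists_orthogonal_hyperplane {X : Type*} [NormedAddCommGroup X]
    [NormedSpace ℝ X] [FiniteDimensional ℝ X] (x : X) (hx : x ≠ 0) :
    ∃ H : Submodule ℝ X, Module.finrank ℝ H = Module.finrank ℝ X - 1 ∧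
      ∀ h ∈ H, BJOrth x h := by
  obtain ⟨f, hf1, hfx⟩ := exists_dual_vector ℝ x (norm_ne_zero_iff.mpr hx)
  have hfne : (f : X →ₗ[ℝ] ℝ) ≠ 0 := by
    intro h0
    have : f x = 0 := by
      have := LinearMap.congr_fun h0 x
      simpa using this
    rw [hfx] at this
    exact hx (norm_eq_zero.mp (by exact_mod_cast this))
  refine ⟨LinearMap.ker (f : X →ₗ[ℝ] ℝ), ?_, ?_⟩
  · have := LinearMap.finrank_range_add_finrank_ker (f : X →ₗ[ℝ] ℝ)
    have hr : Module.finrank ℝ (LinearMap.range (f : X →ₗ[ℝ] ℝ)) = 1 := by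
      have : LinearMap.range (f : X →ₗ[ℝ] ℝ) = ⊤ := by
        rw [LinearMap.range_eq_top]
        intro c
        have hfx0 : f x ≠ 0 := by
          rw [hfx]; exact_mod_cast norm_ne_zero_iff.mpr hx
        exact ⟨(c / f x) • x, by simp [map_smul, div_mul_cancel₀ _ hfx0]⟩
      rw [this]
      simp
    omega
  · intro h hh lam
    have hfh : f h = 0 := hh
    have : f (x + lam • h) = ‖x‖ := by
      simp [map_add, map_smul, hfh, hfx]
    calc ‖x‖ = f (x + lam • h) := this.symm
      _ ≤ ‖f (x + lam • h)‖ := le_abs_self _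
      _ ≤ ‖f‖ * ‖x + lam • h‖ := f.le_opNorm _
      _ = ‖x + lam • h‖ := by rw [hf1, one_mul]
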